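/- Let m be an even positive integer and let f be a cyclic bent function on F_{2^{m−1}} × F_2 with f(0,0) = f(0,1) = 0. Define the binary code C(f) = { c_{(a,λ,u,v)} : a, λ ∈ F_{2^{m−1}}, u, v ∈ F_2 }, where c_{(a,λ,u,v)} is the vector ( f(a x₁, x₂) + Tr^{m−1}_1(λ x₁) + u x₂ + v )_{(x₁,x₂) ∈ F_{2^{m−1}} × F_2} ∈ F_2^{2^m}. Then the 2^{2m} codewords c_{(a,λ,u,v)} are pairwise distinct, the minimum Hamming distance of C(f) is 2^{m−1} − 2^{(m−2)/2}, every codeword has Hamming weight in {0, 2^m, 2^{m−1}, 2^{m−1} + 2^{(m−2)/2}, 2^{m−1} − 2^{(m−2)/2}}, and the number of codewords of weight 0, 2^m, 2^{m−1}, 2^{m−1}+2^{(m−2)/2}, 2^{m−1}−2^{(m−2)/2} is 1, 1, 2^{m+1}−2, 2^m(2^{m−1}−1), 2^m(2^{m−1}−1) respectively. -/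

import Mathlib

open Finset

noncomputable section

abbrev Fq (n : ℕ) := GaloisField 2 n

noncomputable instance (n : ℕ) : Fintype (Fq n) := Fintype.ofFinite _

/-- Absolute trace from `F_{2^n}` to `F_2`. -/
noncomputable def tr1 (n : ℕ) (x : Fq n) : ZMod 2 :=
  Algebra.trace (ZMod 2) (Fq n) x

/-- `(-1)^x` for `x : F_2`, as an integer. -/
def chi (x : ZMod 2) : ℤ := (-1 : ℤ) ^ x.val

/-- Walsh transform of a Boolean function on `F_{2^n} × F_2`. -/
noncomputable def walsh (n : ℕ) (f : Fq n × ZMod 2 → ZMod 2)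
    (lam : Fq n) (nu : ZMod 2) : ℤ :=
  ∑ x : Fq n × ZMod 2, chi (f x + tr1 n (lam * x.1) + nu * x.2)

/-- A Boolean function on `F_{2^{m-1}} × F_2` is bent if all its Walsh coefficients
are `± 2^(m/2)`. -/
def IsBent (m : ℕ) (f : Fq (m - 1) × ZMod 2 → ZMod 2) : Prop :=
  ∀ lam nu, walsh (m - 1) f lam nu = 2 ^ (m / 2) ∨ walsh (m - 1) f lam nu = -(2 ^ (m / 2))

/-- Cyclic bent function on `F_{2^{m-1}} × F_2`. -/
def IsCyclicBent (m : ℕ) (f : Fq (m - 1) × ZMod 2 → ZMod 2) : Prop :=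
  ∀ a b : Fq (m - 1), a ≠ b → ∀ ε : ZMod 2,
    IsBent m fun x => f (a * x.1, x.2) + f (b * x.1, x.2 + ε)

noncomputable instance (n : ℕ) : DecidableEq (Fq n) := Classical.decEq _

/-- The codeword `c_{(a,λ,u,v)} = (f(a x₁, x₂) + Tr(λ x₁) + u x₂ + v)_{(x₁,x₂)}`,
viewed as a vector in `F_2^{2^m}` indexed by `F_{2^{m-1}} × F_2`. -/
noncomputable def cword (m : ℕ) (f : Fq (m - 1) × ZMod 2 → ZMod 2)
    (q : Fq (m - 1) × Fq (m - 1) × ZMod 2 × ZMod 2)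
    (x : Fq (m - 1) × ZMod 2) : ZMod 2 :=
  f (q.1 * x.1, x.2) + tr1 (m - 1) (q.2.1 * x.1) + q.2.2.1 * x.2 + q.2.2.2

/-- Hamming weight of a vector indexed by `F_{2^{m-1}} × F_2`. -/
noncomputable def hwt (m : ℕ) (c : Fq (m - 1) × ZMod 2 → ZMod 2) : ℕ :=
  (Finset.univ.filter fun x : Fq (m - 1) × ZMod 2 => c x ≠ 0).card

/-- Hamming distance. -/
noncomputable def hdist (m : ℕ) (c c' : Fq (m - 1) × ZMod 2 → ZMod 2) : ℕ :=
  (Finset.univ.filter fun x : Fq (m - 1) × ZMod 2 => c x ≠ c' x).card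

section Aux

lemma zmod2_cases (v : ZMod 2) : v = 0 ∨ v = 1 := by revert v; decide
lemma chi_add (a b : ZMod 2) : chi (a + b) = chi a * chi b := by revert a b; decide
lemma zmod2_add_self (a : ZMod 2) : a + a = 0 := by revert a; decide
lemma zmod2_ne_iff (a b : ZMod 2) : a ≠ b ↔ a + b ≠ 0 := by revert a b; decide
lemma zmod2_addone (a : ZMod 2) : a + 1 ≠ 0 ↔ ¬ a ≠ 0 := by revert a; decide
lemma zmod2_addone_addone (a : ZMod 2) : a + 1 + 1 = a := by revert a; decide
lemma zmod2_add_eq_one (a b : ZMod 2) (h : a ≠ b) : a + b = 1 := by revert a b; decide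
lemma zmod2_eq_of_add_eq_zero (a b : ZMod 2) (h : a + b = 0) : a = b := by revert a b; decide
lemma chi_cases (v : ZMod 2) : (v = 0 ∧ chi v = 1) ∨ (v = 1 ∧ chi v = -1) := by revert v; decide

lemma card_Fq (n : ℕ) (h : n ≠ 0) : Fintype.card (Fq n) = 2 ^ n := by
  rw [← Nat.card_eq_fintype_card]; exact GaloisField.card 2 n h
lemma fq_add_self (n : ℕ) (a : Fq n) : a + a = 0 := by
  have h2 : (2 : Fq n) = 0 := by
    have : CharP (GaloisField 2 n) 2 := inferInstance
    exact_mod_cast (CharP.cast_eq_zero (GaloisField 2 n) 2)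
  calc a + a = 2 * a := by ring
  _ = 0 := by rw [h2, zero_mul]
lemma fq_eq_of_add_eq_zero (n : ℕ) (a b : Fq n) (h : a + b = 0) : a = b := by
  linear_combination h - fq_add_self n b
lemma tr1_add (n : ℕ) (a b : Fq n) : tr1 n (a + b) = tr1 n a + tr1 n b := by
  simp [tr1, map_add]
lemma tr1_zero (n : ℕ) : tr1 n 0 = 0 := by simp [tr1]

lemma sum_chi_eq_card (m : ℕ) (g : Fq (m-1) × ZMod 2 → ZMod 2) :
    ∑ x : Fq (m-1) × ZMod 2, chi (g x)
      = (Fintype.card (Fq (m-1) × ZMod 2) : ℤ) - 2 * hwt m g := by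
  classical
  have h1 : ∀ x, chi (g x) = if g x ≠ 0 then (-1 : ℤ) else 1 := by
    intro x; rcases zmod2_cases (g x) with h | h <;> simp [h, chi] <;> rfl
  simp only [h1]
  rw [Finset.sum_ite]
  simp only [Finset.sum_const, nsmul_eq_mul, mul_one, mul_neg_one]
  have hc := Finset.card_filter_add_card_filter_not
    (s := (univ : Finset (Fq (m-1) × ZMod 2))) (fun x => g x ≠ 0)
  rw [Finset.card_univ] at hc
  rw [hwt]
  have hcard : (Finset.filter (fun x => ¬ g x ≠ 0) univ).card
      = Fintype.card (Fq (m-1) × ZMod 2) - (Finset.filter (fun x => g x ≠ 0) univ).card := by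
    omega
  rw [hcard]
  have hle : (Finset.filter (fun x => g x ≠ 0) (univ : Finset (Fq (m-1) × ZMod 2))).card
      ≤ Fintype.card (Fq (m-1) × ZMod 2) := by omega
  push_cast [hle]
  ring

lemma sum_chi_tr (n : ℕ) : ∑ y : Fq n, chi (tr1 n y) = 0 := by
  have htr : Algebra.trace (ZMod 2) (Fq n) ≠ 0 := Algebra.trace_ne_zero _ _
  obtain ⟨z, hz⟩ : ∃ z, tr1 n z ≠ 0 := by
    by_contra h
    push_neg at h
    apply htr
    ext y
    simpa [tr1] using h y
  have hz1 : tr1 n z = 1 := by rcases zmod2_cases (tr1 n z) with h | h <;> simp_all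
  have h1 : ∑ y : Fq n, chi (tr1 n (y + z)) = ∑ y : Fq n, chi (tr1 n y) :=
    Fintype.sum_equiv (Equiv.addRight z) _ _ (fun y => rfl)
  have h2 : ∀ y : Fq n, chi (tr1 n (y + z)) = - chi (tr1 n y) := by
    intro y
    rw [tr1_add, chi_add, hz1]
    have h3 : ZMod.val (1 : ZMod 2) = 1 := rfl
    simp [chi, h3]
  simp only [h2, Finset.sum_neg_distrib] at h1
  linarith

lemma sum_chi_tr_mul (n : ℕ) (hn : n ≠ 0) (lam : Fq n) :
    ∑ x : Fq n, chi (tr1 n (lam * x)) = if lam = 0 then (2:ℤ)^n else 0 := by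
  split_ifs with h
  · subst h; simp [tr1, card_Fq n hn, chi]
  · rw [show ∑ x : Fq n, chi (tr1 n (lam * x)) = ∑ y : Fq n, chi (tr1 n y) from
      Fintype.sum_equiv (Equiv.mulLeft₀ lam h) _ _ (fun y => rfl)]
    exact sum_chi_tr n

lemma sum_chi_snd (u : ZMod 2) : ∑ x : ZMod 2, chi (u * x) = if u = 0 then 2 else 0 := by
  revert u; decide

lemma walsh_congr (n : ℕ) (g g' : Fq n × ZMod 2 → ZMod 2) (h : ∀ x, g x = g' x)
    (lam : Fq n) (nu : ZMod 2) : walsh n g lam nu = walsh n g' lam nu := by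
  unfold walsh
  exact Finset.sum_congr rfl fun x _ => by rw [h x]

lemma walsh_const_zero (m : ℕ) (hn : m - 1 ≠ 0) (lam : Fq (m-1)) (u : ZMod 2) :
    walsh (m-1) (fun _ => 0) lam u
      = (if lam = 0 then (2:ℤ)^(m-1) else 0) * (if u = 0 then 2 else 0) := by
  rw [walsh, Fintype.sum_prod_type]
  simp only [zero_add, chi_add]
  rw [← Finset.sum_mul_sum]
  rw [sum_chi_tr_mul (m-1) hn lam, sum_chi_snd u]

lemma sum_chi_shift (m : ℕ) (g : Fq (m-1) × ZMod 2 → ZMod 2) (lam : Fq (m-1)) (u v : ZMod 2) :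
    ∑ x : Fq (m-1) × ZMod 2, chi (g x + tr1 (m-1) (lam * x.1) + u * x.2 + v)
      = chi v * walsh (m-1) g lam u := by
  rw [walsh, Finset.mul_sum]
  exact Finset.sum_congr rfl fun x _ => by rw [chi_add]; ring

end Aux

/-- the generalized Kerdock code `C(f)` obtained from a cyclic bent
function: `2^{2m}` pairwise distinct codewords, the indicated weight distribution, and
minimum distance `2^{m-1} - 2^{(m-2)/2}`. -/
theorem stmt16 (m : ℕ) (hm : Even m) (hm0 : 0 < m)
    (f : Fq (m - 1) × ZMod 2 → ZMod 2) (hf : IsCyclicBent m f)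
    (hf00 : f (0, 0) = 0) (hf01 : f (0, 1) = 0) :
    Function.Injective (cword m f) ∧
    (∀ q : Fq (m - 1) × Fq (m - 1) × ZMod 2 × ZMod 2,
      hwt m (cword m f q) ∈
        ({0, 2 ^ m, 2 ^ (m - 1), 2 ^ (m - 1) + 2 ^ ((m - 2) / 2),
          2 ^ (m - 1) - 2 ^ ((m - 2) / 2)} : Set ℕ)) ∧
    (∀ q q' : Fq (m - 1) × Fq (m - 1) × ZMod 2 × ZMod 2, q ≠ q' →
      2 ^ (m - 1) - 2 ^ ((m - 2) / 2) ≤ hdist m (cword m f q) (cword m f q')) ∧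
    (∃ q q' : Fq (m - 1) × Fq (m - 1) × ZMod 2 × ZMod 2, q ≠ q' ∧
      hdist m (cword m f q) (cword m f q') = 2 ^ (m - 1) - 2 ^ ((m - 2) / 2)) ∧
    (Finset.univ.filter fun q : Fq (m - 1) × Fq (m - 1) × ZMod 2 × ZMod 2 =>
        hwt m (cword m f q) = 0).card = 1 ∧
    (Finset.univ.filter fun q : Fq (m - 1) × Fq (m - 1) × ZMod 2 × ZMod 2 =>
        hwt m (cword m f q) = 2 ^ m).card = 1 ∧
    (Finset.univ.filter fun q : Fq (m - 1) × Fq (m - 1) × ZMod 2 × ZMod 2 =>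
        hwt m (cword m f q) = 2 ^ (m - 1)).card = 2 ^ (m + 1) - 2 ∧
    (Finset.univ.filter fun q : Fq (m - 1) × Fq (m - 1) × ZMod 2 × ZMod 2 =>
        hwt m (cword m f q) = 2 ^ (m - 1) + 2 ^ ((m - 2) / 2)).card
      = 2 ^ m * (2 ^ (m - 1) - 1) ∧
    (Finset.univ.filter fun q : Fq (m - 1) × Fq (m - 1) × ZMod 2 × ZMod 2 =>
        hwt m (cword m f q) = 2 ^ (m - 1) - 2 ^ ((m - 2) / 2)).card
      = 2 ^ m * (2 ^ (m - 1) - 1) := by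
    classical
  obtain ⟨k, hk⟩ := hm
  have hm2 : 2 ≤ m := by omega
  have hm1 : m - 1 ≠ 0 := by omega
  have hE1 : 1 ≤ 2 ^ ((m-2)/2) := Nat.one_le_two_pow
  have hN1 : 1 ≤ 2 ^ (m-1) := Nat.one_le_two_pow
  have hEN : 2 ^ ((m-2)/2) < 2 ^ (m-1) := by
    apply Nat.pow_lt_pow_right one_lt_two; omega
  have hM : 2 ^ m = 2 * 2 ^ (m-1) := by
    rw [← pow_succ']; congr 1; omega
  have hM1 : 2 ^ (m+1) = 4 * 2 ^ (m-1) := by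
    have : (4:ℕ) * 2^(m-1) = 2^((m-1)+2) := by rw [pow_add]; ring
    rw [this]; congr 1; omega
  have hZM : (2:ℤ) ^ m = 2 * 2 ^ (m-1) := by
    rw [← pow_succ']; congr 1; omega
  have hZh : (2:ℤ) ^ (m/2) = 2 * 2 ^ ((m-2)/2) := by
    rw [← pow_succ']; congr 1; omega
  have hcardP : Fintype.card (Fq (m-1) × ZMod 2) = 2 ^ m := by
    rw [Fintype.card_prod, card_Fq _ hm1, ZMod.card, hM]; ring
  have hcardQ : Fintype.card (Fq (m - 1) × Fq (m - 1) × ZMod 2 × ZMod 2)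
      = 2^(m-1) * (2^(m-1) * (2*2)) := by
    simp [Fintype.card_prod, card_Fq _ hm1, ZMod.card]
  -- key: weight from character sum
  have key : ∀ g : Fq (m-1) × ZMod 2 → ZMod 2, ∀ w : ℕ,
      (∑ x : Fq (m-1) × ZMod 2, chi (g x)) = (2:ℤ)^m - 2*(w:ℤ) → hwt m g = w := by
    intro g w h
    have h2 := sum_chi_eq_card m g
    rw [hcardP] at h2
    push_cast at h2
    have h4 : (hwt m g : ℤ) = (w : ℤ) := by linarith
    exact_mod_cast h4
  have hf0 : ∀ x₂ : ZMod 2, f (0, x₂) = 0 := by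
    intro x₂; rcases zmod2_cases x₂ with h|h <;> rw [h] <;> assumption
  have hsum : ∀ (a lam : Fq (m-1)) (u v : ZMod 2),
      ∑ x : Fq (m-1) × ZMod 2, chi (cword m f (a,lam,u,v) x)
        = chi v * walsh (m-1) (fun x => f (a * x.1, x.2)) lam u := by
    intro a lam u v
    simp only [cword]
    exact sum_chi_shift m (fun x => f (a * x.1, x.2)) lam u v
  have hbent1 : ∀ a : Fq (m-1), a ≠ 0 → IsBent m (fun x => f (a * x.1, x.2)) := by
    intro a ha lam nu
    have hb := hf a 0 ha 0 lam nu
    have hco : walsh (m-1) (fun x => f (a*x.1, x.2) + f (0*x.1, x.2 + 0)) lam nu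
        = walsh (m-1) (fun x => f (a*x.1, x.2)) lam nu := by
      apply walsh_congr
      intro x
      rw [zero_mul, add_zero, hf0 x.2, add_zero]
    rw [hco] at hb
    exact hb
  have hbent2 : ∀ a b : Fq (m-1), a ≠ b →
      IsBent m (fun x => f (a*x.1, x.2) + f (b*x.1, x.2)) := by
    intro a b hab lam nu
    have hb := hf a b hab 0 lam nu
    have hco : walsh (m-1) (fun x => f (a*x.1,x.2) + f (b*x.1, x.2+0)) lam nu
        = walsh (m-1) (fun x => f (a*x.1,x.2) + f (b*x.1,x.2)) lam nu := by
      apply walsh_congr; intro x; rw [add_zero]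
    rw [hco] at hb; exact hb
  -- weight for a = 0
  have wt0 : ∀ (lam : Fq (m-1)) (u v : ZMod 2),
      hwt m (cword m f (0, lam, u, v))
        = if lam = 0 ∧ u = 0 then (if v = 0 then 0 else 2^m) else 2^(m-1) := by
    intro lam u v
    have hw : walsh (m-1) (fun x => f ((0:Fq (m-1)) * x.1, x.2)) lam u
        = (if lam = 0 then (2:ℤ)^(m-1) else 0) * (if u = 0 then 2 else 0) := by
      rw [walsh_congr (m-1) _ (fun _ => 0) (fun x => by rw [zero_mul, hf0 x.2]) lam u]
      exact walsh_const_zero m hm1 lam u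
    have hS := hsum 0 lam u v
    rw [hw] at hS
    by_cases hlu : lam = 0 ∧ u = 0
    · rw [if_pos hlu]
      obtain ⟨hl, hu⟩ := hlu
      rw [if_pos hl, if_pos hu] at hS
      rcases chi_cases v with ⟨hv, hcv⟩ | ⟨hv, hcv⟩
      · rw [if_pos hv]
        apply key _ 0
        rw [hS, hcv]
        push_cast
        linarith [hZM]
      · rw [if_neg (by rw [hv]; exact one_ne_zero)]
        apply key _ (2^m)
        rw [hS, hcv]
        push_cast
        linarith [hZM]
    · rw [if_neg hlu]
      apply key _ (2^(m-1))
      have hz : (if lam = 0 then (2:ℤ)^(m-1) else 0) * (if u = 0 then 2 else 0) = 0 := by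
        rcases not_and_or.mp hlu with h | h <;> rw [if_neg h] <;> ring
      rw [hS, hz]
      push_cast
      linarith [hZM]
  -- weight for a ≠ 0
  have wtne : ∀ (a lam : Fq (m-1)) (u v : ZMod 2), a ≠ 0 →
      hwt m (cword m f (a, lam, u, v)) = 2^(m-1) + 2^((m-2)/2)
      ∨ hwt m (cword m f (a, lam, u, v)) = 2^(m-1) - 2^((m-2)/2) := by
    intro a lam u v ha
    have hS := hsum a lam u v
    have hsub : ((2^(m-1) - 2^((m-2)/2) : ℕ) : ℤ) = (2:ℤ)^(m-1) - 2^((m-2)/2) := by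
      push_cast [hEN.le]; ring
    rcases hbent1 a ha lam u with hW | hW <;> rcases chi_cases v with ⟨hv,hcv⟩|⟨hv,hcv⟩
    · right
      apply key _ _
      rw [hS, hW, hcv, hsub]
      linarith [hZM, hZh]
    · left
      apply key _ _
      rw [hS, hW, hcv]
      push_cast
      linarith [hZM, hZh]
    · left
      apply key _ _
      rw [hS, hW, hcv]
      push_cast
      linarith [hZM, hZh]
    · right
      apply key _ _
      rw [hS, hW, hcv, hsub]
      linarith [hZM, hZh]
  -- complement and flip
  have hwt_compl : ∀ c : Fq (m-1) × ZMod 2 → ZMod 2,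
      hwt m (fun x => c x + 1) = 2^m - hwt m c := by
    intro c
    have h1 : (univ.filter fun x : Fq (m-1) × ZMod 2 => c x + 1 ≠ 0)
        = univ.filter (fun x => ¬ c x ≠ 0) := by
      apply Finset.filter_congr; intro x _; exact zmod2_addone (c x)
    unfold hwt
    rw [h1]
    have hc := Finset.card_filter_add_card_filter_not
      (s := (univ : Finset (Fq (m-1) × ZMod 2))) (fun x => c x ≠ 0)
    rw [Finset.card_univ, hcardP] at hc
    omega
  have hflipc : ∀ (a lam : Fq (m-1)) (u v : ZMod 2),
      cword m f (a,lam,u,v+1) = fun x => cword m f (a,lam,u,v) x + 1 := by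
    intro a lam u v; funext x; simp only [cword]; ring
  have hflip : ∀ (a lam : Fq (m-1)) (u v : ZMod 2),
      hwt m (cword m f (a,lam,u,v+1)) = 2^m - hwt m (cword m f (a,lam,u,v)) := by
    intro a lam u v; rw [hflipc]; exact hwt_compl _
  -- pointwise difference
  have hdiff : ∀ (a a' lam lam' : Fq (m-1)) (u u' v v' : ZMod 2) (x : Fq (m-1) × ZMod 2),
      cword m f (a,lam,u,v) x + cword m f (a',lam',u',v') x
        = (f (a*x.1,x.2) + f (a'*x.1,x.2)) + tr1 (m-1) ((lam+lam')*x.1)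
            + (u+u')*x.2 + (v+v') := by
    intro a a' lam lam' u u' v v' x
    simp only [cword]
    rw [add_mul lam lam', tr1_add, add_mul u u']
    ring
  have hdist_eq : ∀ c c' : Fq (m-1) × ZMod 2 → ZMod 2,
      hdist m c c' = hwt m (fun x => c x + c' x) := by
    intro c c'; unfold hdist hwt; congr 1
    apply Finset.filter_congr; intro x _; exact zmod2_ne_iff _ _
  -- weight of differences with distinct first coordinates
  have wdiff : ∀ (a a' lam lam' : Fq (m-1)) (u u' v v' : ZMod 2), a ≠ a' →
      hwt m (fun x => cword m f (a,lam,u,v) x + cword m f (a',lam',u',v') x)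
          = 2^(m-1) + 2^((m-2)/2)
      ∨ hwt m (fun x => cword m f (a,lam,u,v) x + cword m f (a',lam',u',v') x)
          = 2^(m-1) - 2^((m-2)/2) := by
    intro a a' lam lam' u u' v v' ha
    have hS : ∑ x : Fq (m-1) × ZMod 2,
        chi (cword m f (a,lam,u,v) x + cword m f (a',lam',u',v') x)
        = chi (v+v') * walsh (m-1) (fun x => f (a*x.1,x.2) + f (a'*x.1,x.2))
            (lam+lam') (u+u') := by
      rw [show ∑ x : Fq (m-1) × ZMod 2,
          chi (cword m f (a,lam,u,v) x + cword m f (a',lam',u',v') x)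
        = ∑ x : Fq (m-1) × ZMod 2,
          chi ((fun y : Fq (m-1) × ZMod 2 => f (a*y.1,y.2) + f (a'*y.1,y.2)) x
            + tr1 (m-1) ((lam+lam')*x.1) + (u+u')*x.2 + (v+v')) from
        Finset.sum_congr rfl fun x _ => by rw [hdiff]]
      exact sum_chi_shift m _ (lam+lam') (u+u') (v+v')
    have hsub : ((2^(m-1) - 2^((m-2)/2) : ℕ) : ℤ) = (2:ℤ)^(m-1) - 2^((m-2)/2) := by
      push_cast [hEN.le]; ring
    rcases hbent2 a a' ha (lam+lam') (u+u') with hW | hW <;>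
      rcases chi_cases (v+v') with ⟨hv,hcv⟩|⟨hv,hcv⟩
    · right; apply key _ _; rw [hS, hW, hcv, hsub]; linarith [hZM, hZh]
    · left; apply key _ _; rw [hS, hW, hcv]; push_cast; linarith [hZM, hZh]
    · left; apply key _ _; rw [hS, hW, hcv]; push_cast; linarith [hZM, hZh]
    · right; apply key _ _; rw [hS, hW, hcv, hsub]; linarith [hZM, hZh]
  -- weight of differences with equal first coordinates
  have wdiffeq : ∀ (a lam lam' : Fq (m-1)) (u u' v v' : ZMod 2),
      (lam, u, v) ≠ (lam', u', v') →
      hwt m (fun x => cword m f (a,lam,u,v) x + cword m f (a,lam',u',v') x) = 2^m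
      ∨ hwt m (fun x => cword m f (a,lam,u,v) x + cword m f (a,lam',u',v') x)
          = 2^(m-1) := by
    intro a lam lam' u u' v v' hne
    have hS : ∑ x : Fq (m-1) × ZMod 2,
        chi (cword m f (a,lam,u,v) x + cword m f (a,lam',u',v') x)
        = chi (v+v') * ((if lam + lam' = 0 then (2:ℤ)^(m-1) else 0)
            * (if u + u' = 0 then 2 else 0)) := by
      rw [show ∑ x : Fq (m-1) × ZMod 2,
          chi (cword m f (a,lam,u,v) x + cword m f (a,lam',u',v') x)
        = ∑ x : Fq (m-1) × ZMod 2,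
          chi ((fun _ : Fq (m-1) × ZMod 2 => (0 : ZMod 2)) x
            + tr1 (m-1) ((lam+lam')*x.1) + (u+u')*x.2 + (v+v')) from
        Finset.sum_congr rfl fun x _ => by
          rw [hdiff, zmod2_add_self (f (a*x.1,x.2))]]
      rw [sum_chi_shift m _ (lam+lam') (u+u') (v+v'),
        walsh_const_zero m hm1 (lam+lam') (u+u')]
    by_cases hlu : lam + lam' = 0 ∧ u + u' = 0
    · left
      have hl : lam = lam' := fq_eq_of_add_eq_zero _ _ _ hlu.1
      have hu : u = u' := zmod2_eq_of_add_eq_zero _ _ hlu.2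
      have hv : v ≠ v' := by
        intro h; exact hne (by rw [hl, hu, h])
      have hv1 : v + v' = 1 := zmod2_add_eq_one _ _ hv
      apply key _ _
      rw [hS, if_pos hlu.1, if_pos hlu.2, hv1]
      push_cast
      have : chi 1 = -1 := rfl
      rw [this]
      linarith [hZM]
    · right
      apply key _ _
      have hz : (if lam + lam' = 0 then (2:ℤ)^(m-1) else 0)
          * (if u + u' = 0 then 2 else 0) = 0 := by
        rcases not_and_or.mp hlu with h | h <;> rw [if_neg h] <;> ring
      rw [hS, hz]
      push_cast
      linarith [hZM]
  -- minimum distance bound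
  have hmind : ∀ q q' : Fq (m-1) × Fq (m-1) × ZMod 2 × ZMod 2, q ≠ q' →
      2^(m-1) - 2^((m-2)/2) ≤ hdist m (cword m f q) (cword m f q') := by
    rintro ⟨a,lam,u,v⟩ ⟨a',lam',u',v'⟩ hne
    rw [hdist_eq]
    by_cases ha : a = a'
    · subst ha
      have hne2 : (lam, u, v) ≠ (lam', u', v') := by
        intro h; exact hne (by rw [h])
      rcases wdiffeq a lam lam' u u' v v' hne2 with h | h <;> rw [h] <;> omega
    · rcases wdiff a a' lam lam' u u' v v' ha with h | h <;> rw [h] <;> omega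
  -- injectivity
  have hinj : Function.Injective (cword m f) := by
    intro q q' h
    by_contra hne
    have hd := hmind q q' hne
    have hz : hdist m (cword m f q) (cword m f q') = 0 := by
      rw [h]; unfold hdist; simp
    omega
  -- the zero codeword
  have hzero : ∀ x : Fq (m-1) × ZMod 2, cword m f (0,0,0,0) x = 0 := by
    intro x
    simp only [cword, zero_mul, tr1_zero, hf0, add_zero, zero_add]
  -- existence of distance-realizing pair
  have hexist : ∃ q q' : Fq (m-1) × Fq (m-1) × ZMod 2 × ZMod 2, q ≠ q' ∧
      hdist m (cword m f q) (cword m f q') = 2^(m-1) - 2^((m-2)/2) := by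
    have hd1 : ∀ v : ZMod 2, hdist m (cword m f (1,0,0,v)) (cword m f (0,0,0,0))
        = hwt m (cword m f (1,0,0,v)) := by
      intro v; unfold hdist hwt; congr 1
      apply Finset.filter_congr; intro x _; rw [hzero x]
    have hne1 : ∀ v : ZMod 2, ((1 : Fq (m-1)),(0:Fq (m-1)),(0:ZMod 2),v) ≠ (0,0,0,0) := by
      intro v h
      exact one_ne_zero (congrArg Prod.fst h)
    rcases wtne 1 0 0 0 one_ne_zero with h | h
    · refine ⟨(1,0,0,1), (0,0,0,0), hne1 1, ?_⟩
      rw [hd1 1]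
      have h2 : hwt m (cword m f (1,0,0,(0:ZMod 2)+1))
          = 2^m - hwt m (cword m f (1,0,0,0)) := hflip 1 0 0 0
      rw [zero_add] at h2
      rw [h2, h]
      omega
    · exact ⟨(1,0,0,0), (0,0,0,0), hne1 0, by rw [hd1 0]; exact h⟩
  -- membership
  have hmem : ∀ q : Fq (m-1) × Fq (m-1) × ZMod 2 × ZMod 2,
      hwt m (cword m f q) ∈ ({0, 2^m, 2^(m-1), 2^(m-1)+2^((m-2)/2),
        2^(m-1)-2^((m-2)/2)} : Set ℕ) := by
    rintro ⟨a,lam,u,v⟩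
    simp only [Set.mem_insert_iff, Set.mem_singleton_iff]
    by_cases ha : a = 0
    · subst ha
      rw [wt0]
      by_cases hlu : lam = 0 ∧ u = 0
      · rw [if_pos hlu]
        by_cases hv : v = 0
        · rw [if_pos hv]; exact Or.inl rfl
        · rw [if_neg hv]; exact Or.inr (Or.inl rfl)
      · rw [if_neg hlu]; exact Or.inr (Or.inr (Or.inl rfl))
    · rcases wtne a lam u v ha with h | h
      · rw [h]; exact Or.inr (Or.inr (Or.inr (Or.inl rfl)))
      · rw [h]; exact Or.inr (Or.inr (Or.inr (Or.inr rfl)))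
  -- count of weight 0
  have hc0 : (univ.filter fun q : Fq (m-1) × Fq (m-1) × ZMod 2 × ZMod 2 =>
      hwt m (cword m f q) = 0).card = 1 := by
    have hset : (univ.filter fun q : Fq (m-1) × Fq (m-1) × ZMod 2 × ZMod 2 =>
        hwt m (cword m f q) = 0)
        = {((0:Fq (m-1)), (0:Fq (m-1)), (0:ZMod 2), (0:ZMod 2))} := by
      ext ⟨a,lam,u,v⟩
      simp only [mem_filter, mem_univ, true_and, mem_singleton, Prod.mk.injEq]
      constructor
      · intro h
        by_cases ha : a = 0
        · subst ha
          rw [wt0] at h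
          by_cases hlu : lam = 0 ∧ u = 0
          · rw [if_pos hlu] at h
            by_cases hv : v = 0
            · exact ⟨rfl, hlu.1, hlu.2, hv⟩
            · rw [if_neg hv] at h; omega
          · rw [if_neg hlu] at h; omega
        · rcases wtne a lam u v ha with h' | h' <;> omega
      · rintro ⟨rfl, rfl, rfl, rfl⟩
        rw [wt0, if_pos ⟨rfl, rfl⟩, if_pos rfl]
    rw [hset, card_singleton]
  -- count of weight 2^m
  have hcM : (univ.filter fun q : Fq (m-1) × Fq (m-1) × ZMod 2 × ZMod 2 =>
      hwt m (cword m f q) = 2^m).card = 1 := by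
    have hset : (univ.filter fun q : Fq (m-1) × Fq (m-1) × ZMod 2 × ZMod 2 =>
        hwt m (cword m f q) = 2^m)
        = {((0:Fq (m-1)), (0:Fq (m-1)), (0:ZMod 2), (1:ZMod 2))} := by
      ext ⟨a,lam,u,v⟩
      simp only [mem_filter, mem_univ, true_and, mem_singleton, Prod.mk.injEq]
      constructor
      · intro h
        by_cases ha : a = 0
        · subst ha
          rw [wt0] at h
          by_cases hlu : lam = 0 ∧ u = 0
          · rw [if_pos hlu] at h
            by_cases hv : v = 0
            · rw [if_pos hv] at h; omega
            · rcases zmod2_cases v with hv' | hv'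
              · exact absurd hv' hv
              · exact ⟨rfl, hlu.1, hlu.2, hv'⟩
          · rw [if_neg hlu] at h; omega
        · rcases wtne a lam u v ha with h' | h' <;> omega
      · rintro ⟨rfl, rfl, rfl, rfl⟩
        rw [wt0, if_pos ⟨rfl, rfl⟩, if_neg one_ne_zero]
    rw [hset, card_singleton]
  -- slab cardinality
  have hslab : (univ.filter fun q : Fq (m-1) × Fq (m-1) × ZMod 2 × ZMod 2 =>
      q.1 = 0).card = 2^(m-1) * (2*2) := by
    have hb : (univ.filter fun q : Fq (m-1) × Fq (m-1) × ZMod 2 × ZMod 2 =>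
        q.1 = 0).card = (univ : Finset (Fq (m-1) × ZMod 2 × ZMod 2)).card := by
      apply Finset.card_bij (fun q _ => q.2)
      · intro q hq; exact mem_univ _
      · rintro ⟨a,r⟩ ha ⟨a',r'⟩ ha' h
        simp only [mem_filter] at ha ha'
        simp only at h
        rw [Prod.mk.injEq]
        exact ⟨ha.2.trans ha'.2.symm, h⟩
      · intro r _
        exact ⟨(0, r), by simp, rfl⟩
    rw [hb, card_univ]
    simp [Fintype.card_prod, card_Fq _ hm1]
  -- pair cardinality
  have hpair : (univ.filter fun q : Fq (m-1) × Fq (m-1) × ZMod 2 × ZMod 2 =>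
      q.1 = 0 ∧ q.2.1 = 0 ∧ q.2.2.1 = 0).card = 2 := by
    have hset : (univ.filter fun q : Fq (m-1) × Fq (m-1) × ZMod 2 × ZMod 2 =>
        q.1 = 0 ∧ q.2.1 = 0 ∧ q.2.2.1 = 0)
        = {((0:Fq (m-1)),(0:Fq (m-1)),(0:ZMod 2),(0:ZMod 2)), (0,0,0,1)} := by
      ext ⟨a,lam,u,v⟩
      simp only [mem_filter, mem_univ, true_and, mem_insert, mem_singleton,
        Prod.mk.injEq]
      constructor
      · rintro ⟨rfl, rfl, rfl⟩
        rcases zmod2_cases v with h | h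
        · left; exact ⟨rfl, rfl, rfl, h⟩
        · right; exact ⟨rfl, rfl, rfl, h⟩
      · rintro (⟨rfl,rfl,rfl,rfl⟩|⟨rfl,rfl,rfl,rfl⟩) <;> exact ⟨rfl, rfl, rfl⟩
    rw [hset]
    rw [Finset.card_insert_of_notMem, card_singleton]
    intro hmem0
    rw [Finset.mem_singleton] at hmem0
    exact zero_ne_one
      (congrArg (fun q : Fq (m-1) × Fq (m-1) × ZMod 2 × ZMod 2 => q.2.2.2) hmem0)
  -- count of weight 2^(m-1)
  have hcN : (univ.filter fun q : Fq (m-1) × Fq (m-1) × ZMod 2 × ZMod 2 =>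
      hwt m (cword m f q) = 2^(m-1)).card = 2^(m+1) - 2 := by
    have hset : (univ.filter fun q : Fq (m-1) × Fq (m-1) × ZMod 2 × ZMod 2 =>
        hwt m (cword m f q) = 2^(m-1))
        = (univ.filter fun q : Fq (m-1) × Fq (m-1) × ZMod 2 × ZMod 2 => q.1 = 0)
          \ (univ.filter fun q : Fq (m-1) × Fq (m-1) × ZMod 2 × ZMod 2 =>
              q.1 = 0 ∧ q.2.1 = 0 ∧ q.2.2.1 = 0) := by
      ext ⟨a,lam,u,v⟩
      simp only [mem_sdiff, mem_filter, mem_univ, true_and]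
      constructor
      · intro h
        by_cases ha : a = 0
        · subst ha
          refine ⟨rfl, ?_⟩
          rintro ⟨-, rfl, rfl⟩
          rw [wt0, if_pos ⟨rfl, rfl⟩] at h
          rcases zmod2_cases v with hv | hv
          · rw [if_pos hv] at h; omega
          · rw [if_neg (by rw [hv]; exact one_ne_zero)] at h; omega
        · exfalso; rcases wtne a lam u v ha with h' | h' <;> omega
      · rintro ⟨rfl, hno⟩
        rw [wt0, if_neg (fun hlu => hno ⟨rfl, hlu.1, hlu.2⟩)]
    rw [hset, Finset.card_sdiff_of_subset (by
      intro q hq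
      simp only [mem_filter, mem_univ, true_and] at hq ⊢
      exact hq.1), hslab, hpair]
    omega
  -- cardinality of the a ≠ 0 part
  have hA : (univ.filter fun q : Fq (m-1) × Fq (m-1) × ZMod 2 × ZMod 2 =>
      ¬ q.1 = 0).card = 2 * (2^m * (2^(m-1) - 1)) := by
    have h1 := Finset.card_filter_add_card_filter_not
      (s := (univ : Finset (Fq (m-1) × Fq (m-1) × ZMod 2 × ZMod 2)))
      (fun q => q.1 = 0)
    rw [Finset.card_univ, hcardQ, hslab] at h1
    have harith : 2^(m-1) * (2^(m-1) * (2*2)) - 2^(m-1) * (2*2)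
        = 2 * (2^m * (2^(m-1) - 1)) := by
      rw [hM]
      have hle : 2^(m-1) * (2*2) ≤ 2^(m-1) * (2^(m-1) * (2*2)) :=
        Nat.mul_le_mul_left _ (Nat.le_mul_of_pos_left _ (by omega))
      zify [hle, hN1]
      ring
    omega
  -- the two filters for weights 2^(m-1) ± 2^((m-2)/2)
  have hSp : (univ.filter fun q : Fq (m-1) × Fq (m-1) × ZMod 2 × ZMod 2 =>
      hwt m (cword m f q) = 2^(m-1) + 2^((m-2)/2))
      = (univ.filter fun q : Fq (m-1) × Fq (m-1) × ZMod 2 × ZMod 2 =>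
          ¬ q.1 = 0).filter
        (fun q => hwt m (cword m f q) = 2^(m-1) + 2^((m-2)/2)) := by
    rw [Finset.filter_filter]
    apply Finset.filter_congr
    rintro ⟨a,lam,u,v⟩ -
    constructor
    · intro h
      refine ⟨?_, h⟩
      intro ha; subst ha
      rw [wt0] at h
      by_cases hlu : lam = 0 ∧ u = 0
      · rw [if_pos hlu] at h
        by_cases hv : v = 0
        · rw [if_pos hv] at h; omega
        · rw [if_neg hv] at h; omega
      · rw [if_neg hlu] at h; omega
    · exact fun h => h.2
  have hSm : (univ.filter fun q : Fq (m-1) × Fq (m-1) × ZMod 2 × ZMod 2 =>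
      hwt m (cword m f q) = 2^(m-1) - 2^((m-2)/2))
      = (univ.filter fun q : Fq (m-1) × Fq (m-1) × ZMod 2 × ZMod 2 =>
          ¬ q.1 = 0).filter
        (fun q => hwt m (cword m f q) = 2^(m-1) - 2^((m-2)/2)) := by
    rw [Finset.filter_filter]
    apply Finset.filter_congr
    rintro ⟨a,lam,u,v⟩ -
    constructor
    · intro h
      refine ⟨?_, h⟩
      intro ha; subst ha
      rw [wt0] at h
      by_cases hlu : lam = 0 ∧ u = 0
      · rw [if_pos hlu] at h
        by_cases hv : v = 0
        · rw [if_pos hv] at h; omega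
        · rw [if_neg hv] at h; omega
      · rw [if_neg hlu] at h; omega
    · exact fun h => h.2
  have hbijpm :
      ((univ.filter fun q : Fq (m-1) × Fq (m-1) × ZMod 2 × ZMod 2 =>
          ¬ q.1 = 0).filter
        (fun q => hwt m (cword m f q) = 2^(m-1) + 2^((m-2)/2))).card
      = ((univ.filter fun q : Fq (m-1) × Fq (m-1) × ZMod 2 × ZMod 2 =>
          ¬ q.1 = 0).filter
        (fun q => hwt m (cword m f q) = 2^(m-1) - 2^((m-2)/2))).card := by
    apply Finset.card_bij (fun q _ => (q.1, q.2.1, q.2.2.1, q.2.2.2 + 1))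
    · rintro ⟨a,lam,u,v⟩ hq
      simp only [mem_filter, mem_univ, true_and] at hq ⊢
      refine ⟨hq.1, ?_⟩
      rw [hflip a lam u v, hq.2]
      omega
    · rintro ⟨a,lam,u,v⟩ h1 ⟨a',lam',u',v'⟩ h2 h
      simp only [Prod.mk.injEq] at h ⊢
      exact ⟨h.1, h.2.1, h.2.2.1, add_right_cancel h.2.2.2⟩
    · rintro ⟨a,lam,u,v⟩ hq
      refine ⟨(a,lam,u,v+1), ?_, ?_⟩
      · simp only [mem_filter, mem_univ, true_and] at hq ⊢
        refine ⟨hq.1, ?_⟩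
        rw [hflip a lam u v, hq.2]
        omega
      · show ((a,lam,u,v+1).1, (a,lam,u,v+1).2.1, (a,lam,u,v+1).2.2.1,
            (a,lam,u,v+1).2.2.2 + 1) = (a,lam,u,v)
        simp only []
        rw [zmod2_addone_addone]
  have hsplit :
      ((univ.filter fun q : Fq (m-1) × Fq (m-1) × ZMod 2 × ZMod 2 =>
          ¬ q.1 = 0).filter
        (fun q => hwt m (cword m f q) = 2^(m-1) + 2^((m-2)/2))).card
      + ((univ.filter fun q : Fq (m-1) × Fq (m-1) × ZMod 2 × ZMod 2 =>
          ¬ q.1 = 0).filter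
        (fun q => hwt m (cword m f q) = 2^(m-1) - 2^((m-2)/2))).card
      = (univ.filter fun q : Fq (m-1) × Fq (m-1) × ZMod 2 × ZMod 2 =>
          ¬ q.1 = 0).card := by
    have h1 := Finset.card_filter_add_card_filter_not
      (s := univ.filter fun q : Fq (m-1) × Fq (m-1) × ZMod 2 × ZMod 2 => ¬ q.1 = 0)
      (fun q => hwt m (cword m f q) = 2^(m-1) + 2^((m-2)/2))
    have h2 : (univ.filter fun q : Fq (m-1) × Fq (m-1) × ZMod 2 × ZMod 2 =>
          ¬ q.1 = 0).filter
        (fun q => ¬ hwt m (cword m f q) = 2^(m-1) + 2^((m-2)/2))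
        = (univ.filter fun q : Fq (m-1) × Fq (m-1) × ZMod 2 × ZMod 2 =>
          ¬ q.1 = 0).filter
        (fun q => hwt m (cword m f q) = 2^(m-1) - 2^((m-2)/2)) := by
      apply Finset.filter_congr
      rintro ⟨a,lam,u,v⟩ hq
      simp only [mem_filter, mem_univ, true_and] at hq
      rcases wtne a lam u v hq with h | h <;> rw [h] <;> omega
    rw [h2] at h1
    exact h1
  -- the ± counts
  have hcp : (univ.filter fun q : Fq (m-1) × Fq (m-1) × ZMod 2 × ZMod 2 =>
      hwt m (cword m f q) = 2^(m-1) + 2^((m-2)/2)).card = 2^m * (2^(m-1) - 1) := by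
    rw [hSp]
    generalize hG : 2^m * (2^(m-1) - 1) = S at hA ⊢
    omega
  have hcm : (univ.filter fun q : Fq (m-1) × Fq (m-1) × ZMod 2 × ZMod 2 =>
      hwt m (cword m f q) = 2^(m-1) - 2^((m-2)/2)).card = 2^m * (2^(m-1) - 1) := by
    rw [hSm]
    generalize hG : 2^m * (2^(m-1) - 1) = S at hA ⊢
    omega
  exact ⟨hinj, hmem, hmind, hexist, hc0, hcM, hcN, hcp, hcm⟩
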